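/- The Stationary Delegation Algorithm instantiated with k copies of the Exponential Weights algorithm (with learning rate tuned as ε = √((ln k)/n)) achieves per-round swap regret at most 2·k·h·√((ln k)/n) on every sequence of payoff vectors in [0,h]^k. -/

import Mathlib

open Finset

namespace SDA13

variable {k n : ℕ}

/-- Cumulative gain of action `c` up to (exclusive) time `m`. -/
noncomputable def Gc (g : Fin n → Fin k → ℝ) (m : ℕ) (c : Fin k) : ℝ :=
  ∑ i' ∈ Finset.univ.filter (fun i' : Fin n => i'.val < m), g i' c

/-- Exponential weight of action `c` at time `m`. -/
noncomputable def wt (ε h : ℝ) (g : Fin n → Fin k → ℝ) (m : ℕ) (c : Fin k) : ℝ :=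
  (1 + ε) ^ (Gc g m c / h)

/-- Total weight at time `m`. -/
noncomputable def Wt (ε h : ℝ) (g : Fin n → Fin k → ℝ) (m : ℕ) : ℝ :=
  ∑ c, wt ε h g m c

/-- Gain of exponential weights in round `i`. -/
noncomputable def qt (ε h : ℝ) (g : Fin n → Fin k → ℝ) (i : Fin n) : ℝ :=
  (∑ c, wt ε h g i.val c * g i c) / Wt ε h g i.val

/-- Cumulative gain of exponential weights up to time `m`. -/
noncomputable def Qt (ε h : ℝ) (g : Fin n → Fin k → ℝ) (m : ℕ) : ℝ :=
  ∑ i ∈ Finset.univ.filter (fun i : Fin n => i.val < m), qt ε h g i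

lemma filter_succ (m : ℕ) (hm : m < n) :
    Finset.univ.filter (fun i : Fin n => i.val < m + 1)
      = insert ⟨m, hm⟩ (Finset.univ.filter (fun i : Fin n => i.val < m)) := by
  ext i
  simp only [mem_filter, mem_univ, true_and, mem_insert, Fin.ext_iff]
  omega

lemma Gc_succ (g : Fin n → Fin k → ℝ) (m : ℕ) (hm : m < n) (c : Fin k) :
    Gc g (m + 1) c = g ⟨m, hm⟩ c + Gc g m c := by
  rw [Gc, Gc, filter_succ m hm, Finset.sum_insert (by simp)]

lemma Qt_succ (ε h : ℝ) (g : Fin n → Fin k → ℝ) (m : ℕ) (hm : m < n) :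
    Qt ε h g (m + 1) = qt ε h g ⟨m, hm⟩ + Qt ε h g m := by
  rw [Qt, Qt, filter_succ m hm, Finset.sum_insert (by simp)]

lemma rpow_le_one_add_mul (ε x : ℝ) (hε : 0 ≤ ε) (h0 : 0 ≤ x) (h1 : x ≤ 1) :
    (1 + ε) ^ x ≤ 1 + ε * x := by
  have hp : (0:ℝ) < 1 + ε := by linarith
  have e : (1 + ε) ^ x = Real.exp (x * Real.log (1 + ε)) := by
    rw [Real.rpow_def_of_pos hp, mul_comm]
  rw [e]
  have hcx := convexOn_exp.2 (Set.mem_univ (0:ℝ)) (Set.mem_univ (Real.log (1 + ε)))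
      (by linarith : (0:ℝ) ≤ 1 - x) h0 (by ring)
  simp only [smul_eq_mul, mul_zero, zero_add, Real.exp_zero, Real.exp_log hp, mul_one] at hcx
  linarith [hcx]

lemma pot_bound (hk : 0 < k) (h : ℝ) (hh : 0 < h) (ε : ℝ) (hε : 0 < ε)
    (g : Fin n → Fin k → ℝ) (hg0 : ∀ i c, 0 ≤ g i c) (hgh : ∀ i c, g i c ≤ h) :
    ∀ m, m ≤ n → Wt ε h g m ≤ k * Real.exp (ε / h * Qt ε h g m) := by
  have hp : (0:ℝ) < 1 + ε := by linarith
  intro m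
  induction m with
  | zero =>
    intro _
    have hW0 : Wt ε h g 0 = k := by simp [Wt, wt, Gc]
    have hQ0 : Qt ε h g 0 = 0 := by simp [Qt]
    rw [hW0, hQ0, mul_zero, Real.exp_zero, mul_one]
  | succ m ih =>
    intro hm1
    have hm : m < n := hm1
    set i0 : Fin n := ⟨m, hm⟩ with hi0
    have hWpos : 0 < Wt ε h g m := by
      refine Finset.sum_pos (fun c _ => ?_) ⟨⟨0, hk⟩, Finset.mem_univ _⟩
      exact Real.rpow_pos_of_pos hp _
    have hval : (i0 : Fin n).val = m := rfl
    calc Wt ε h g (m + 1)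
        = ∑ c, wt ε h g m c * (1 + ε) ^ (g i0 c / h) := by
          refine Finset.sum_congr rfl fun c _ => ?_
          rw [wt, wt, Gc_succ g m hm c, add_div, Real.rpow_add hp]
          ring
      _ ≤ ∑ c, wt ε h g m c * (1 + ε * (g i0 c / h)) := by
          refine Finset.sum_le_sum fun c _ => ?_
          refine mul_le_mul_of_nonneg_left ?_ (Real.rpow_pos_of_pos hp _).le
          exact rpow_le_one_add_mul ε _ hε.le (div_nonneg (hg0 _ _) hh.le)
            ((div_le_one hh).mpr (hgh _ _))
      _ = Wt ε h g m + ε / h * ∑ c, wt ε h g m c * g i0 c := by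
          simp only [mul_add, mul_one, Finset.sum_add_distrib]
          rw [Wt, Finset.mul_sum]
          congr 1
          exact Finset.sum_congr rfl fun c _ => by ring
      _ = Wt ε h g m * (1 + ε / h * qt ε h g i0) := by
          rw [qt, hval]
          field_simp
      _ ≤ Wt ε h g m * Real.exp (ε / h * qt ε h g i0) := by
          refine mul_le_mul_of_nonneg_left ?_ hWpos.le
          linarith [Real.add_one_le_exp (ε / h * qt ε h g i0)]
      _ ≤ (k * Real.exp (ε / h * Qt ε h g m)) * Real.exp (ε / h * qt ε h g i0) := by
          exact mul_le_mul_of_nonneg_right (ih hm.le) (Real.exp_nonneg _)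
      _ = k * Real.exp (ε / h * Qt ε h g (m + 1)) := by
          rw [Qt_succ ε h g m hm, mul_assoc, ← Real.exp_add]
          ring_nf
          rfl

lemma log_one_add_ge (ε : ℝ) (hε : 0 < ε) : ε * (1 - ε) ≤ Real.log (1 + ε) := by
  have hp : (0:ℝ) < 1 + ε := by linarith
  have hinv := Real.log_le_sub_one_of_pos (inv_pos.mpr hp)
  rw [Real.log_inv] at hinv
  have hie : (1 + ε) * (1 + ε)⁻¹ = 1 := mul_inv_cancel₀ hp.ne'
  nlinarith [hinv, hie, hε, mul_pos (mul_pos hε hε) hε]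

set_option maxHeartbeats 1000000 in
lemma copy_bound (hk : 0 < k) (h : ℝ) (hh : 0 < h) (ε : ℝ) (hε : 0 < ε)
    (g : Fin n → Fin k → ℝ) (hg0 : ∀ i c, 0 ≤ g i c) (hgh : ∀ i c, g i c ≤ h)
    (b : Fin k) :
    (1 - ε) * Gc g n b - h * Real.log k / ε ≤ Qt ε h g n := by
  have hp : (0:ℝ) < 1 + ε := by linarith
  have hkpos : (0:ℝ) < k := by exact_mod_cast hk
  have hwpos : 0 < wt ε h g n b := Real.rpow_pos_of_pos hp _
  have hwW : wt ε h g n b ≤ Wt ε h g n :=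
    Finset.single_le_sum (f := wt ε h g n)
      (fun c _ => (Real.rpow_pos_of_pos hp _).le) (Finset.mem_univ b)
  have hWk := pot_bound hk h hh ε hε g hg0 hgh n le_rfl
  have hlog : Real.log (wt ε h g n b) ≤ Real.log (k * Real.exp (ε / h * Qt ε h g n)) :=
    Real.log_le_log hwpos (hwW.trans hWk)
  rw [wt, Real.log_rpow hp, Real.log_mul hkpos.ne' (Real.exp_ne_zero _), Real.log_exp] at hlog
  have hS0 : 0 ≤ Gc g n b :=
    Finset.sum_nonneg fun i _ => hg0 i b
  have hlog2 := log_one_add_ge ε hε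
  have hmul : Gc g n b * Real.log (1 + ε) ≤ h * Real.log k + ε * Qt ε h g n := by
    have h2 := mul_le_mul_of_nonneg_right hlog hh.le
    have e1 : Gc g n b / h * Real.log (1 + ε) * h = Gc g n b * Real.log (1 + ε) := by
      field_simp
    have e2 : (Real.log k + ε / h * Qt ε h g n) * h = h * Real.log k + ε * Qt ε h g n := by
      field_simp
    rw [e1, e2] at h2
    exact h2
  have key : ε * ((1 - ε) * Gc g n b) ≤ h * Real.log k + ε * Qt ε h g n := by
    nlinarith [mul_le_mul_of_nonneg_right hlog2 hS0]
  have e3 : (1 - ε) * Gc g n b - h * Real.log k / ε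
      = (ε * ((1 - ε) * Gc g n b) - h * Real.log k) / ε := by
    field_simp
  rw [e3, div_le_iff₀ hε]
  nlinarith [key]

end SDA13

set_option maxHeartbeats 1000000 in
open SDA13 in
/-- The Stationary Delegation Algorithm instantiated with `k` copies of
Exponential Weights with learning rate `ε = √((ln k)/n)` — copy `a` is fed the scaled
payoff vectors `α^{i'}_a · v^{i'}`, so its round-`i` recommendation gives action `b`
probability proportional to `(1+ε)^((Σ_{i'<i} α^{i'}_a v^{i'}_b)/h)`, and the algorithm
plays a stationary distribution `α^i` of the matrix of recommendations — achieves
per-round swap regret at most `2·k·h·√((ln k)/n)` on every payoff sequence in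
`[0,h]^k`. -/
theorem sda_with_exponential_weights_swap_regret
    (k n : ℕ) (hk : 0 < k) (hn : 0 < n) (h : ℝ) (hh : 0 < h)
    (ε : ℝ) (hεdef : ε = Real.sqrt (Real.log k / n))
    (v : Fin n → Fin k → ℝ) (hv : ∀ i b, v i b ∈ Set.Icc (0 : ℝ) h)
    (α : Fin n → Fin k → ℝ)
    (hα0 : ∀ i a, 0 ≤ α i a) (hα1 : ∀ i, ∑ a, α i a = 1)
    (hstat : ∀ (i : Fin n) (b : Fin k),
        ∑ a : Fin k,
            α i a *
              ((1 + ε) ^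
                  ((∑ i' ∈ Finset.univ.filter (fun i' : Fin n => i'.val < i.val),
                      α i' a * v i' b) / h)
                / ∑ c : Fin k,
                    (1 + ε) ^
                      ((∑ i' ∈ Finset.univ.filter (fun i' : Fin n => i'.val < i.val),
                          α i' a * v i' c) / h))
          = α i b) :
    ∀ f : Fin k → Fin k,
      ∑ i : Fin n, ∑ a : Fin k, α i a * v i a
        ≥ (∑ i : Fin n, ∑ a : Fin k, α i a * v i (f a))
          - (2 * k * h * Real.sqrt (Real.log k / n)) * n := by
  intro f
  by_cases hk1 : k = 1
  · subst hk1
    have hf : ∀ a : Fin 1, f a = a := fun a => Subsingleton.elim _ _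
    simp only [hf]
    have : Real.log ((1:ℕ):ℝ) = 0 := by norm_num
    rw [this]
    simp
  · have hk2 : 2 ≤ k := by omega
    have hkR : (1:ℝ) < k := by exact_mod_cast hk2
    have hL : 0 < Real.log k := Real.log_pos hkR
    have hnR : (0:ℝ) < n := by exact_mod_cast hn
    have hεpos : 0 < ε := by
      rw [hεdef]; exact Real.sqrt_pos.mpr (div_pos hL hnR)
    have hε2 : ε ^ 2 * n = Real.log k := by
      rw [hεdef, Real.sq_sqrt (div_nonneg hL.le hnR.le)]
      field_simp
    have hαle1 : ∀ i a, α i a ≤ 1 := by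
      intro i a
      have hs := Finset.single_le_sum (f := α i) (fun a _ => hα0 i a) (Finset.mem_univ a)
      rw [hα1 i] at hs
      exact hs
    set g : Fin k → Fin n → Fin k → ℝ := fun a i c => α i a * v i c with hgdef
    have hg0 : ∀ a i c, 0 ≤ g a i c := fun a i c => mul_nonneg (hα0 i a) (hv i c).1
    have hgh : ∀ a i c, g a i c ≤ h := by
      intro a i c
      have hvc := hv i c
      calc g a i c = α i a * v i c := rfl
        _ ≤ 1 * h := mul_le_mul (hαle1 i a) hvc.2 hvc.1 zero_le_one
        _ = h := one_mul h
    have hcopy : ∀ a, (1 - ε) * Gc (g a) n (f a) - h * Real.log k / ε ≤ Qt ε h (g a) n :=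
      fun a => copy_bound hk h hh ε hεpos (g a) (hg0 a) (hgh a) (f a)
    have hGna : ∀ a, Gc (g a) n (f a) = ∑ i, α i a * v i (f a) := by
      intro a
      rw [Gc, Finset.filter_true_of_mem (fun i _ => i.isLt)]
    have hQt : ∀ a, Qt ε h (g a) n = ∑ i, qt ε h (g a) i := by
      intro a
      rw [Qt, Finset.filter_true_of_mem (fun i _ => i.isLt)]
    have hrow : ∀ i : Fin n, ∑ a, qt ε h (g a) i = ∑ c, α i c * v i c := by
      intro i
      have e1 : ∀ a, qt ε h (g a) i
          = ∑ c, (α i a * (wt ε h (g a) i.val c / Wt ε h (g a) i.val)) * v i c := by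
        intro a
        rw [qt, Finset.sum_div]
        refine Finset.sum_congr rfl fun c _ => ?_
        have : g a i c = α i a * v i c := rfl
        rw [this]
        ring
      calc ∑ a, qt ε h (g a) i
          = ∑ a, ∑ c, (α i a * (wt ε h (g a) i.val c / Wt ε h (g a) i.val)) * v i c :=
            Finset.sum_congr rfl fun a _ => e1 a
        _ = ∑ c, (∑ a, α i a * (wt ε h (g a) i.val c / Wt ε h (g a) i.val)) * v i c := by
            rw [Finset.sum_comm]
            exact Finset.sum_congr rfl fun c _ => (Finset.sum_mul _ _ _).symm
        _ = ∑ c, α i c * v i c := by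
            refine Finset.sum_congr rfl fun c _ => ?_
            congr 1
            have hs := hstat i c
            simp only [wt, Wt, Gc, hgdef]
            exact hs
    have halg : ∑ i, ∑ a, α i a * v i a = ∑ a, Qt ε h (g a) n := by
      calc ∑ i : Fin n, ∑ a : Fin k, α i a * v i a
          = ∑ i, ∑ a, qt ε h (g a) i := Finset.sum_congr rfl fun i _ => (hrow i).symm
        _ = ∑ a, ∑ i, qt ε h (g a) i := Finset.sum_comm
        _ = ∑ a, Qt ε h (g a) n := Finset.sum_congr rfl fun a _ => (hQt a).symm
    have hGle : ∀ a, Gc (g a) n (f a) ≤ h * ∑ i, α i a := by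
      intro a
      rw [hGna a, Finset.mul_sum]
      refine Finset.sum_le_sum fun i _ => ?_
      have hvc := hv i (f a)
      nlinarith [hα0 i a, hvc.1, hvc.2]
    have hsum1 : ∑ a : Fin k, ∑ i : Fin n, α i a = (n:ℝ) := by
      rw [Finset.sum_comm]
      simp [hα1]
    have h1 : ∀ a, (∑ i, α i a * v i (f a)) - ε * h * (∑ i, α i a) - h * Real.log k / ε
        ≤ Qt ε h (g a) n := by
      intro a
      have hc := hcopy a
      have hg2 : ε * Gc (g a) n (f a) ≤ ε * (h * ∑ i, α i a) :=
        mul_le_mul_of_nonneg_left (hGle a) hεpos.le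
      rw [hGna a] at hc hg2
      nlinarith [hc, hg2]
    have main : (∑ i, ∑ a, α i a * v i (f a)) - ε * h * n - k * (h * Real.log k / ε)
        ≤ ∑ a, Qt ε h (g a) n := by
      calc (∑ i, ∑ a, α i a * v i (f a)) - ε * h * n - k * (h * Real.log k / ε)
          = (∑ a, ∑ i, α i a * v i (f a)) - ε * h * (∑ a, ∑ i, α i a)
              - k * (h * Real.log k / ε) := by rw [Finset.sum_comm, hsum1]
        _ = ∑ a : Fin k, ((∑ i, α i a * v i (f a)) - ε * h * (∑ i, α i a)
              - h * Real.log k / ε) := by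
            rw [Finset.sum_sub_distrib, Finset.sum_sub_distrib, ← Finset.mul_sum,
              Finset.sum_const, Finset.card_univ, Fintype.card_fin, nsmul_eq_mul]
        _ ≤ ∑ a, Qt ε h (g a) n := Finset.sum_le_sum fun a _ => h1 a
    have hLε : h * Real.log k / ε = h * ε * n := by
      rw [div_eq_iff hεpos.ne']
      linear_combination (-h) * hε2
    rw [hLε] at main
    rw [ge_iff_le, ← hεdef, halg]
    nlinarith [main, mul_nonneg (mul_nonneg hεpos.le hh.le) hnR.le, hkR]
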